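/- Let F be a field with char F = 2 and more than two elements, and let · be a bilinear multiplication on F × F that is not identically zero, is endo-commutative ((x·x)·(y·y) = (x·y)·(x·y) for all x, y) and is curled (for every x there exists λ ∈ F with x·x = λ • x). Then (F × F, ·) is isomorphic to exactly one of the following algebras, given by their matrices of structure constants: ((α1, 0, 0, 0), (0, 1, 1+α1, 0)) for some α1 ∈ F; or ((1, 0, 0, 0), (0, 0, 1, 0)). Here 'exactly one' means in addition that no two distinct algebras of this list (in particular for distinct values of α1) are isomorphic to each other. -/

import Mathlib

/-- The bilinear multiplication on `F × F` determined by the matrix of structure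
constants `((a1, a2, a3, a4), (b1, b2, b3, b4))`. -/
def scMul {F : Type*} [Field F] (a1 a2 a3 a4 b1 b2 b3 b4 : F) (x y : F × F) : F × F :=
  (a1 * x.1 * y.1 + a2 * x.1 * y.2 + a3 * x.2 * y.1 + a4 * x.2 * y.2,
   b1 * x.1 * y.1 + b2 * x.1 * y.2 + b3 * x.2 * y.1 + b4 * x.2 * y.2)

/-- A multiplication `m` on `F × F` is endo-commutative if `(x·x)·(y·y) = (x·y)·(x·y)`. -/
def IsEndoCommutative {F : Type*} [Field F] (m : F × F → F × F → F × F) : Prop :=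
  ∀ x y : F × F, m (m x x) (m y y) = m (m x y) (m x y)

/-- A multiplication `m` on `F × F` is curled if every square `x·x` is a scalar
multiple of `x`. -/
def IsCurled {F : Type*} [Field F] (m : F × F → F × F → F × F) : Prop :=
  ∀ x : F × F, ∃ lam : F, m x x = lam • x

/-- `m` is bilinear (linear in each argument). -/
def IsBilinearMul {F : Type*} [Field F] (m : F × F → F × F → F × F) : Prop :=
  (∀ (a : F) (x x' y : F × F), m (a • x + x') y = a • m x y + m x' y) ∧
  (∀ (a : F) (x y y' : F × F), m x (a • y + y') = a • m x y + m x y')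

/-- Two multiplications on `F × F` are isomorphic if some `F`-linear
equivalence `g` of `F × F` satisfies `g (x·y) = g x ∘ g y`. -/
def AlgIso {F : Type*} [Field F] (m₁ m₂ : F × F → F × F → F × F) : Prop :=
  ∃ g : (F × F) ≃ₗ[F] F × F, ∀ x y, g (m₁ x y) = m₂ (g x) (g y)

/-- The list of endo-commutative curled algebras (char F = 2, F ≠ ℤ/2ℤ):
`some a1` is `A₃,₂(a1, 0, 1)` and `none` is `A₆,₂(1, 0)`. -/
def ecCurledFamily2 {F : Type*} [Field F] : Option F → (F × F → F × F → F × F)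
  | some a1 => scMul a1 0 0 0 0 1 (1 + a1) 0
  | none => scMul 1 0 0 0 0 0 1 0

section Aux
variable {F : Type*} [Field F]

/-- linear equivalence from an invertible 2×2 matrix -/
def lin2 (p q r s : F) (h : p * s - q * r ≠ 0) : (F × F) ≃ₗ[F] F × F where
  toFun x := (p * x.1 + q * x.2, r * x.1 + s * x.2)
  invFun x := ((s * x.1 - q * x.2) / (p * s - q * r), (p * x.2 - r * x.1) / (p * s - q * r))
  map_add' x y := by simp [Prod.ext_iff]; constructor <;> ring
  map_smul' c x := by simp [Prod.ext_iff, smul_eq_mul]; constructor <;> ring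
  left_inv x := by
    simp only [Prod.ext_iff]
    have h1 : s * p - q * r ≠ 0 := by rwa [mul_comm s p]
    have h2 : p * s - r * q ≠ 0 := by rwa [mul_comm r q]
    have h3 : -(r * q) + s * p ≠ 0 := by rwa [mul_comm r q, mul_comm s p, neg_add_eq_sub]
    constructor <;> (field_simp; ring)
  right_inv x := by
    simp only [Prod.ext_iff]
    constructor <;> (rw [mul_div_assoc', mul_div_assoc', ← add_div, div_eq_iff h]; ring)

lemma lin2_apply (p q r s : F) (h : p * s - q * r ≠ 0) (x : F × F) :
    lin2 p q r s h x = (p * x.1 + q * x.2, r * x.1 + s * x.2) := rfl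

lemma algIso_symm {m₁ m₂ : F × F → F × F → F × F} (h : AlgIso m₁ m₂) : AlgIso m₂ m₁ := by
  obtain ⟨g, hg⟩ := h
  refine ⟨g.symm, fun x y => ?_⟩
  have h := hg (g.symm x) (g.symm y)
  rw [g.apply_symm_apply, g.apply_symm_apply] at h
  rw [← h, g.symm_apply_apply]

lemma algIso_trans {m₁ m₂ m₃ : F × F → F × F → F × F} (h : AlgIso m₁ m₂) (h' : AlgIso m₂ m₃) :
    AlgIso m₁ m₃ := by
  obtain ⟨g, hg⟩ := h
  obtain ⟨g', hg'⟩ := h'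
  exact ⟨g.trans g', fun x y => by simp [LinearEquiv.trans_apply, hg, hg']⟩

lemma bilin_rep (m : F × F → F × F → F × F) (hbil : IsBilinearMul m) :
    ∀ x y, m x y = scMul (m (1,0) (1,0)).1 (m (1,0) (0,1)).1 (m (0,1) (1,0)).1 (m (0,1) (0,1)).1
      (m (1,0) (1,0)).2 (m (1,0) (0,1)).2 (m (0,1) (1,0)).2 (m (0,1) (0,1)).2 x y := by
  obtain ⟨hl, hr⟩ := hbil
  have hz1 : ∀ y, m 0 y = 0 := by
    intro y; simpa using hl (-1) 0 0 y
  have hz2 : ∀ x, m x 0 = 0 := by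
    intro x; simpa using hr (-1) x 0 0
  have hsl : ∀ (a : F) (x y : F × F), m (a • x) y = a • m x y := by
    intro a x y
    have h := hl a x 0 y
    simpa [hz1] using h
  have hsr : ∀ (a : F) (x y : F × F), m x (a • y) = a • m x y := by
    intro a x y
    have h := hr a x y 0
    simpa [hz2] using h
  have hal : ∀ x x' y, m (x + x') y = m x y + m x' y := by
    intro x x' y
    have h := hl 1 x x' y
    simpa using h
  have har : ∀ x y y', m x (y + y') = m x y + m x y' := by
    intro x y y'
    have h := hr 1 x y y'
    simpa using h
  intro x y
  have hx : x = x.1 • ((1:F),(0:F)) + x.2 • ((0:F),(1:F)) := by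
    simp [Prod.ext_iff]
  have hy : y = y.1 • ((1:F),(0:F)) + y.2 • ((0:F),(1:F)) := by
    simp [Prod.ext_iff]
  have h1 : ∀ z, m x z = x.1 • m (1,0) z + x.2 • m (0,1) z := by
    intro z
    conv_lhs => rw [hx]
    rw [hal, hsl, hsl]
  have h2 : ∀ u, m u y = y.1 • m u (1,0) + y.2 • m u (0,1) := by
    intro u
    conv_lhs => rw [hy]
    rw [har, hsr, hsr]
  rw [h1, h2, h2]
  simp only [scMul, Prod.ext_iff, Prod.fst_add, Prod.snd_add, Prod.smul_fst, Prod.smul_snd,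
    smul_eq_mul]
  constructor <;> ring

/-- extend an algebra isomorphism check from basis pairs to all pairs -/
lemma scMul_basis_ext (g : (F × F) ≃ₗ[F] F × F) (a1 a2 a3 a4 b1 b2 b3 b4
    A1 A2 A3 A4 B1 B2 B3 B4 : F)
    (h11 : g (a1, b1) = scMul A1 A2 A3 A4 B1 B2 B3 B4 (g (1,0)) (g (1,0)))
    (h12 : g (a2, b2) = scMul A1 A2 A3 A4 B1 B2 B3 B4 (g (1,0)) (g (0,1)))
    (h21 : g (a3, b3) = scMul A1 A2 A3 A4 B1 B2 B3 B4 (g (0,1)) (g (1,0)))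
    (h22 : g (a4, b4) = scMul A1 A2 A3 A4 B1 B2 B3 B4 (g (0,1)) (g (0,1))) :
    ∀ x y, g (scMul a1 a2 a3 a4 b1 b2 b3 b4 x y)
      = scMul A1 A2 A3 A4 B1 B2 B3 B4 (g x) (g y) := by
  intro x y
  have hsc : scMul a1 a2 a3 a4 b1 b2 b3 b4 x y
      = (x.1 * y.1) • ((a1, b1) : F × F) + (x.1 * y.2) • (a2, b2)
        + (x.2 * y.1) • (a3, b3) + (x.2 * y.2) • (a4, b4) := by
    simp only [scMul, Prod.ext_iff, Prod.fst_add, Prod.snd_add, Prod.smul_fst, Prod.smul_snd,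
      smul_eq_mul]
    constructor <;> ring
  have hgx : g x = x.1 • g (1,0) + x.2 • g (0,1) := by
    rw [← map_smul, ← map_smul, ← map_add]
    congr 1
    simp [Prod.ext_iff]
  have hgy : g y = y.1 • g (1,0) + y.2 • g (0,1) := by
    rw [← map_smul, ← map_smul, ← map_add]
    congr 1
    simp [Prod.ext_iff]
  rw [hsc, map_add, map_add, map_add, map_smul, map_smul, map_smul, map_smul,
    h11, h12, h21, h22, hgx, hgy]
  simp only [scMul, Prod.ext_iff, Prod.fst_add, Prod.snd_add, Prod.smul_fst, Prod.smul_snd,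
    smul_eq_mul]
  constructor <;> ring

end Aux

section Inj
variable {F : Type*} [Field F]

/-- coefficient of the square form: `x·x = (c i * x.1) • x` -/
def famC : Option F → F := fun i => i.elim 1 id

def famT {F : Type*} [Field F] : Option F → F := fun i => i.elim 0 (fun a => a⁻¹)

@[simp] lemma famC_some (a : F) : famC (some a) = a := rfl
@[simp] lemma famC_none : famC (none : Option F) = 1 := rfl
@[simp] lemma famT_some (a : F) : famT (some a) = a⁻¹ := rfl
@[simp] lemma famT_none : famT (none : Option F) = (0:F) := rfl

lemma fam_sq (h2' : (2:F) = 0) (k : Option F) (x : F × F) :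
    ecCurledFamily2 k x x = (famC k * x.1) • x := by
  cases k with
  | none =>
    simp only [ecCurledFamily2, scMul, famC, Option.elim, Prod.ext_iff, Prod.smul_fst,
      Prod.smul_snd, smul_eq_mul]
    constructor <;> ring
  | some a =>
    simp only [ecCurledFamily2, scMul, famC, Option.elim, id, Prod.ext_iff, Prod.smul_fst,
      Prod.smul_snd, smul_eq_mul]
    constructor
    · ring
    · linear_combination x.1 * x.2 * h2'

lemma fam_inj (h2' : (2:F) = 0) {i j : Option F}
    (h : AlgIso (ecCurledFamily2 (F := F) i) (ecCurledFamily2 j)) : i = j := by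
  obtain ⟨g, hg⟩ := h
  have hlam : ∀ x : F × F, famC j * (g x).1 = famC i * x.1 := by
    intro x
    rcases eq_or_ne x 0 with rfl | hx
    · simp
    · have h1 := hg x x
      rw [fam_sq h2', fam_sq h2', map_smul] at h1
      have h2 : (famC j * (g x).1 - famC i * x.1) • g x = 0 := by
        rw [sub_smul, ← h1, sub_self]
      rcases smul_eq_zero.mp h2 with h3 | h3
      · exact sub_eq_zero.mp h3
      · exact absurd (g.map_eq_zero_iff.mp h3) hx
  by_cases hci : famC i = 0
  · have hcj : famC j = 0 := by
      have hz := hlam (g.symm (1, 0))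
      rw [g.apply_symm_apply, hci] at hz
      simpa using hz
    cases i with
    | none => exact absurd hci one_ne_zero
    | some a =>
      cases j with
      | none => exact absurd hcj one_ne_zero
      | some b =>
        simp only [famC, Option.elim, id] at hci hcj
        rw [hci, hcj]
  · have hcj : famC j ≠ 0 := by
      intro h0
      have := hlam (1, 0)
      rw [h0] at this
      simp at this
      exact hci this.symm
    -- the invariant t
    set u : F × F := ((famC i)⁻¹, 0) with hu_def
    set v : F × F := ((0:F), (1:F)) with hv_def
    have hst : ecCurledFamily2 i u v = famT i • v := by
      cases i with
      | none =>
        simp [ecCurledFamily2, scMul, famT, u, v, Prod.ext_iff]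
      | some a =>
        simp only [famC_some] at hci
        simp [ecCurledFamily2, scMul, u, v, Prod.ext_iff]
    have h1 : famC j * (g u).1 = 1 := by
      rw [hlam]
      simp [u, mul_inv_cancel₀ hci]
    have h2 : (g v).1 = 0 := by
      have := hlam v
      simp [v] at this
      exact this.resolve_left hcj
    have h3 : g v ≠ 0 := by
      simp only [ne_eq, g.map_eq_zero_iff, v]
      intro hv
      simpa using congrArg Prod.snd hv
    have h3' : (g v).2 ≠ 0 := by
      intro hv2
      exact h3 (Prod.ext h2 hv2)
    have h4 : ecCurledFamily2 j (g u) (g v) = famT i • g v := by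
      rw [← hg, hst, map_smul]
    have h5 : famT i = famT j := by
      cases j with
      | none =>
        have hz := congrArg Prod.snd h4
        simp only [ecCurledFamily2, scMul, Prod.smul_snd, smul_eq_mul, h2] at hz
        rw [famT_none]
        have hz' : famT i * (g v).2 = 0 := by linear_combination -hz
        rcases mul_eq_zero.mp hz' with h | h
        · exact h
        · exact absurd h h3'
      | some b =>
        have hb : b ≠ 0 := hcj
        have hfst := congrArg Prod.snd h4
        simp only [ecCurledFamily2, scMul, Prod.smul_snd, smul_eq_mul, h2] at hfst
        -- hfst : 0 + 1 * (g u).1 * (g v).2 + (1+b) * (g u).2 * 0 + 0 = famT i * (g v).2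
        have hu1 : (g u).1 = b⁻¹ := by
          have hh : b * (g u).1 = 1 := h1
          field_simp
          linear_combination hh
        rw [hu1] at hfst
        have hmain : (1 - famT i * b) * (g v).2 = 0 := by
          have : b⁻¹ * b = 1 := inv_mul_cancel₀ hb
          linear_combination b * hfst - (g v).2 * this
        have h0 : 1 - famT i * b = 0 := by
          rcases mul_eq_zero.mp hmain with h | h
          · exact h
          · exact absurd h h3'
        rw [famT_some]
        field_simp
        linear_combination -h0
    -- conclude i = j
    cases i with
    | none =>
      cases j with
      | none => rfl
      | some b =>
        exfalso
        simp only [famT_some, famT_none] at h5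
        exact hcj (by simpa using inv_eq_zero.mp h5.symm)
    | some a =>
      cases j with
      | none =>
        exfalso
        simp only [famT_some, famT_none] at h5
        exact hci (by simpa using inv_eq_zero.mp h5)
      | some b =>
        simp only [famT_some] at h5
        rw [inv_inj.mp h5]

end Inj

/-- over a field of characteristic 2 with more than two elements,
any nonzero bilinear endo-commutative curled multiplication on `F × F` is
isomorphic to exactly one member of `ecCurledFamily2`, and the members of
`ecCurledFamily2` are pairwise non-isomorphic. -/
theorem stmt_17 {F : Type*} [Field F] (h2 : ringChar F = 2)
    (hcard : ∃ c : F, c ≠ 0 ∧ c ≠ 1)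
    (m : F × F → F × F → F × F) (hbil : IsBilinearMul m)
    (hnz : ¬ ∀ x y, m x y = 0)
    (hec : ∀ x y : F × F, m (m x x) (m y y) = m (m x y) (m x y))
    (hcur : IsCurled m) :
    (∃! i : Option F, AlgIso m (ecCurledFamily2 i)) ∧
      ∀ i j : Option F, i ≠ j → ¬ AlgIso (ecCurledFamily2 i) (ecCurledFamily2 j) := by
  haveI hch : CharP F 2 := h2 ▸ ringChar.charP F
  have h2' : (2 : F) = 0 := by exact_mod_cast CharP.cast_eq_zero F 2
  obtain ⟨c, hc0, hc1⟩ := hcard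
  obtain ⟨a1, a2, a3, a4, b1, b2, b3, b4, hm⟩ :
      ∃ a1 a2 a3 a4 b1 b2 b3 b4 : F, ∀ x y, m x y = scMul a1 a2 a3 a4 b1 b2 b3 b4 x y :=
    ⟨_, _, _, _, _, _, _, _, bilin_rep m hbil⟩
  -- curled constraints
  obtain ⟨l1, hl1⟩ := hcur (1, 0)
  rw [hm] at hl1
  obtain ⟨l2, hl2⟩ := hcur (0, 1)
  rw [hm] at hl2
  obtain ⟨l3, hl3⟩ := hcur (1, 1)
  rw [hm] at hl3
  obtain ⟨l4, hl4⟩ := hcur (1, c)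
  rw [hm] at hl4
  simp only [scMul, Prod.ext_iff, Prod.smul_fst, Prod.smul_snd, smul_eq_mul, mul_one, mul_zero,
    one_mul, zero_mul, add_zero, zero_add] at hl1 hl2 hl3 hl4
  have hb1 : b1 = 0 := by linear_combination hl1.2
  have ha4 : a4 = 0 := by linear_combination hl2.1
  have E1 : a1 + a2 + a3 + a4 = b1 + b2 + b3 + b4 := by linear_combination hl3.1 - hl3.2
  have E2 : b1 + b2 * c + b3 * c + b4 * (c * c) = (a1 + a2 * c + a3 * c + a4 * (c * c)) * c := by
    linear_combination hl4.2 - c * hl4.1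
  have hfac : (a2 + a3 - b4) * (c * (1 - c)) = 0 := by
    linear_combination c * E1 + E2 - (1 - c) * hb1 - (c - c ^ 3) * ha4
  have hS : a2 + a3 - b4 = 0 := by
    rcases mul_eq_zero.mp hfac with h | h
    · exact h
    · exfalso
      rcases mul_eq_zero.mp h with h'' | h''
      · exact hc0 h''
      · exact hc1 (by linear_combination -h'')
  have hT : b2 + b3 - a1 = 0 := by linear_combination -E1 + hS + ha4 - hb1
  have ha3 : a3 = b4 - a2 := by linear_combination hS
  have hb3 : b3 = a1 - b2 := by linear_combination hT
  subst ha3 hb3 hb1 ha4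
  -- endo-commutativity constraints
  have q1 := hec (1, 0) (0, 1)
  have q2 := hec (0, 1) (1, 0)
  simp only [hm] at q1 q2
  simp only [scMul, Prod.ext_iff, mul_one, mul_zero, one_mul, zero_mul, add_zero, zero_add] at q1 q2
  have hKa2 : (a1 * b4 - a1 * a2 - b4 * b2) * a2 = 0 := by linear_combination q1.1
  have hKb2 : (a1 * b4 - a1 * a2 - b4 * b2) * b2 = 0 := by linear_combination q1.2
  have hKa3 : (a1 * b4 - a1 * a2 - b4 * b2) * (b4 - a2) = 0 := by
    linear_combination q2.1 + (a1 * b4 ^ 2 + a1 * a2 ^ 2 - 2 * a1 * b4 * a2 + b4 * a2 * b2 - b4 ^ 2 * b2) * h2'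
  have hKb3 : (a1 * b4 - a1 * a2 - b4 * b2) * (a1 - b2) = 0 := by
    linear_combination q2.2 + (a1 * a2 * b2 - 2 * a1 * b4 * b2 + a1 ^ 2 * b4 - a1 ^ 2 * a2 + b4 * b2 ^ 2) * h2'
  have hK : a1 * b4 - a1 * a2 - b4 * b2 = 0 := by
    by_contra hK0
    have ha2 : a2 = 0 := (mul_eq_zero.mp hKa2).resolve_left hK0
    have hb2' : b2 = 0 := (mul_eq_zero.mp hKb2).resolve_left hK0
    have hb4' : b4 - a2 = 0 := (mul_eq_zero.mp hKa3).resolve_left hK0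
    exact hK0 (by linear_combination a1 * hb4' - b4 * hb2')
  have hnz' : ¬(a1 = 0 ∧ a2 = 0 ∧ b2 = 0 ∧ b4 = 0) := by
    rintro ⟨rfl, rfl, rfl, rfl⟩
    exact hnz fun x y => by simp [hm, scMul]
  -- existence
  have hex : ∃ i : Option F, AlgIso m (ecCurledFamily2 i) := by
    by_cases ha1 : a1 = 0
    · subst ha1
      by_cases hb4 : b4 = 0
      · -- case C : a1 = 0, b4 = 0, target some 0
        subst hb4
        by_cases ha2 : a2 = 0
        · -- C2 : b2 ≠ 0
          subst ha2
          have hb2 : b2 ≠ 0 := fun h => hnz' ⟨rfl, rfl, h, rfl⟩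
          have hdet : b2 * 1 - 0 * 0 ≠ 0 := by simpa using hb2
          refine ⟨some 0, lin2 b2 0 0 1 hdet, fun x y => ?_⟩
          rw [hm]
          show _ = scMul 0 0 0 0 0 1 (1 + 0) 0 _ _
          refine scMul_basis_ext _ _ _ _ _ _ _ _ _ _ _ _ _ _ _ _ _ ?_ ?_ ?_ ?_ x y
          all_goals (
            try simp only [lin2_apply, scMul, Prod.ext_iff, mul_one, mul_zero, one_mul, zero_mul,
              add_zero, zero_add]
            try (constructor <;> (try field_simp) <;> try ring) <;> try trivial)
          all_goals first
            | linear_combination -b2 * h2'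
        · -- C1 : a2 ≠ 0
          have hdet : b2 * 0 - a2 * a2⁻¹ ≠ 0 := by
            rw [mul_inv_cancel₀ ha2]; simp
          refine ⟨some 0, lin2 b2 a2 a2⁻¹ 0 hdet, fun x y => ?_⟩
          rw [hm]
          show _ = scMul 0 0 0 0 0 1 (1 + 0) 0 _ _
          refine scMul_basis_ext _ _ _ _ _ _ _ _ _ _ _ _ _ _ _ _ _ ?_ ?_ ?_ ?_ x y
          all_goals (
            try simp only [lin2_apply, scMul, Prod.ext_iff, mul_one, mul_zero, one_mul, zero_mul,
              add_zero, zero_add]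
            try (constructor <;> (try field_simp) <;> try ring) <;> try trivial)
          all_goals first
            | (refine ⟨?_, trivial⟩; linear_combination a2 * b2 * h2')
            | linear_combination -b2 * a2 * h2'
            | linear_combination -b2 * h2'
            | linear_combination -h2'
            | linear_combination b2 * a2 * h2'
            | linear_combination -a2 * h2'
      · -- case B : a1 = 0, b4 ≠ 0 forces b2 = 0
        have hb2 : b2 = 0 := by
          have h := hK
          have : b4 * b2 = 0 := by linear_combination -h
          exact (mul_eq_zero.mp this).resolve_left hb4
        subst hb2
        by_cases ha2 : b4 - a2 = 0
        · -- B2 : target none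
          have hdet : (0 : F) * 0 - b4 * b4⁻¹ ≠ 0 := by
            rw [mul_inv_cancel₀ hb4]; simp
          refine ⟨none, lin2 0 b4 b4⁻¹ 0 hdet, fun x y => ?_⟩
          rw [hm]
          show _ = scMul 1 0 0 0 0 0 1 0 _ _
          refine scMul_basis_ext _ _ _ _ _ _ _ _ _ _ _ _ _ _ _ _ _ ?_ ?_ ?_ ?_ x y
          all_goals (
            try simp only [lin2_apply, scMul, Prod.ext_iff, mul_one, mul_zero, one_mul, zero_mul,
              add_zero, zero_add]
            try (constructor <;> (try field_simp) <;> try ring) <;> try trivial)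
          all_goals first
            | linear_combination -h2'
            | linear_combination -ha2
            | linear_combination ha2
            | linear_combination (2 * a2 * b4 ^ 2 - a2 ^ 2 * b4 - b4 ^ 3) * h2'
        · -- B1 : target some (b4 / (b4 - a2))
          have hdet : (0 : F) * 0 - (b4 - a2) * b4⁻¹ ≠ 0 := by
            simp [sub_eq_zero, inv_ne_zero hb4, ha2, sub_ne_zero]
          refine ⟨some (b4 / (b4 - a2)), lin2 0 (b4 - a2) b4⁻¹ 0 hdet, fun x y => ?_⟩
          rw [hm]
          show _ = scMul (b4 / (b4 - a2)) 0 0 0 0 1 (1 + b4 / (b4 - a2)) 0 _ _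
          refine scMul_basis_ext _ _ _ _ _ _ _ _ _ _ _ _ _ _ _ _ _ ?_ ?_ ?_ ?_ x y
          all_goals (
            try simp only [lin2_apply, scMul, Prod.ext_iff, mul_one, mul_zero, one_mul, zero_mul,
              add_zero, zero_add]
            try (constructor <;> (try field_simp) <;> try ring) <;> try trivial)
          all_goals first
            | linear_combination -h2'
            | linear_combination (2 * a2 * b4 ^ 2 - a2 ^ 2 * b4 - b4 ^ 3) * h2'
            | linear_combination (a2 - b4) * h2'
    · by_cases hb2 : b2 = 0
      · -- A2 : target none
        subst hb2
        have hdet : a1 * a1⁻¹ - b4 * 0 ≠ 0 := by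
          rw [mul_inv_cancel₀ ha1]; simp
        refine ⟨none, lin2 a1 b4 0 a1⁻¹ hdet, fun x y => ?_⟩
        rw [hm]
        show _ = scMul 1 0 0 0 0 0 1 0 _ _
        refine scMul_basis_ext _ _ _ _ _ _ _ _ _ _ _ _ _ _ _ _ _ ?_ ?_ ?_ ?_ x y
        all_goals (
          try simp only [lin2_apply, scMul, Prod.ext_iff, mul_one, mul_zero, one_mul, zero_mul,
            add_zero, zero_add]
          try (constructor <;> (try field_simp) <;> try ring) <;> try trivial)
        all_goals first
          | linear_combination hK
          | (have h9 : a1 * (b4 - a2) = 0 := by linear_combination hK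
             rcases mul_eq_zero.mp h9 with h | h
             · exact absurd h ha1
             · linear_combination -h)
      · -- A1 : target some (a1 / b2)
        have hdet : b2 * a1⁻¹ - b2 * b4 / a1 * 0 ≠ 0 := by
          simp [hb2, inv_ne_zero ha1]
        refine ⟨some (a1 / b2), lin2 b2 (b2 * b4 / a1) 0 a1⁻¹ hdet, fun x y => ?_⟩
        rw [hm]
        show _ = scMul (a1 / b2) 0 0 0 0 1 (1 + a1 / b2) 0 _ _
        refine scMul_basis_ext _ _ _ _ _ _ _ _ _ _ _ _ _ _ _ _ _ ?_ ?_ ?_ ?_ x y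
        all_goals (
          try simp only [lin2_apply, scMul, Prod.ext_iff, mul_one, mul_zero, one_mul, zero_mul,
            add_zero, zero_add]
          try (constructor <;> (try field_simp) <;> try ring) <;> try trivial)
        all_goals first
          | linear_combination -b2 * hK
          | linear_combination a1 * b2 ^ 2 * hK
          | linear_combination -a1 * b2 ^ 2 * h2'
          | linear_combination -b4 * a1 ^ 3 * b2 ^ 2 * h2'
          | linear_combination -hK
          | linear_combination hK
          | linear_combination -b2 * h2'
          | linear_combination -b4 * b2 * h2'
  obtain ⟨i₀, hi₀⟩ := hex
  refine ⟨⟨i₀, hi₀, fun j hj => fam_inj h2' (algIso_trans (algIso_symm hj) hi₀)⟩,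
    fun i j hne hiso => hne (fam_inj h2' hiso)⟩
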